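/- Let (a_n) be a null sequence in R^d satisfying the Lévy–Steinitz condition: ∑_{n=1}^∞ |⟨a_n, e⟩| = ∞ for every unit vector e ∈ S^{d-1}. Then the achievement set S(a_n) = {x ∈ R^d : ∃ ε ∈ {-1,1}^N with ∑_{n=1}^∞ ε_n a_n = x} is dense in R^d. -/

import Mathlib

open Filter Finset
open scoped RealInnerProductSpace

lemma capacity (d : ℕ) (a : ℕ → EuclideanSpace ℝ (Fin d))
    (hLS : ∀ e : EuclideanSpace ℝ (Fin d), ‖e‖ = 1 → ¬ Summable (fun n => |⟪a n, e⟫|))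
    (M : ℝ) (N₀ : ℕ) :
    ∃ N₁, N₀ ≤ N₁ ∧ ∀ e : EuclideanSpace ℝ (Fin d), ‖e‖ = 1 →
      M ≤ ∑ n ∈ Finset.Ico N₀ N₁, |⟪a n, e⟫| := by
  have hUopen : ∀ K : ℕ,
      IsOpen {y : EuclideanSpace ℝ (Fin d) | M < ∑ n ∈ Finset.Ico N₀ K, |⟪a n, y⟫|} := by
    intro K
    apply isOpen_lt continuous_const
    exact continuous_finset_sum _ fun n _ => (continuous_const.inner continuous_id).abs
  have hcover : Metric.sphere (0 : EuclideanSpace ℝ (Fin d)) 1 ⊆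
      ⋃ K : ℕ, {y : EuclideanSpace ℝ (Fin d) | M < ∑ n ∈ Finset.Ico N₀ K, |⟪a n, y⟫|} := by
    intro e he
    rw [mem_sphere_zero_iff_norm] at he
    have hns : ¬ Summable (fun n => |⟪a (n + N₀), e⟫|) := by
      intro h
      exact hLS e he ((summable_nat_add_iff N₀).mp h)
    have ht := (not_summable_iff_tendsto_nat_atTop_of_nonneg
      (fun n => abs_nonneg _)).mp hns
    obtain ⟨K, hK⟩ := (ht.eventually (eventually_gt_atTop M)).exists
    refine Set.mem_iUnion.mpr ⟨N₀ + K, ?_⟩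
    have heq : ∑ n ∈ Finset.Ico N₀ (N₀ + K), |⟪a n, e⟫|
        = ∑ i ∈ Finset.range K, |⟪a (i + N₀), e⟫| := by
      rw [Finset.sum_Ico_eq_sum_range]
      simp [add_comm, add_tsub_cancel_left]
    show M < ∑ n ∈ Finset.Ico N₀ (N₀ + K), |⟪a n, e⟫|
    rw [heq]; exact hK
  obtain ⟨t, ht⟩ := (isCompact_sphere (0 : EuclideanSpace ℝ (Fin d)) 1).elim_finite_subcover
    (fun K : ℕ => {y : EuclideanSpace ℝ (Fin d) | M < ∑ n ∈ Finset.Ico N₀ K, |⟪a n, y⟫|})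
    hUopen hcover
  refine ⟨max N₀ (t.sup id + 1), le_max_left _ _, ?_⟩
  intro e he
  have he' : e ∈ Metric.sphere (0 : EuclideanSpace ℝ (Fin d)) 1 := by
    rwa [mem_sphere_zero_iff_norm]
  obtain ⟨K, hKt, hKe⟩ := Set.mem_iUnion₂.mp (ht he')
  have hKle : K ≤ max N₀ (t.sup id + 1) :=
    le_trans (le_trans (Finset.le_sup (f := id) hKt) (Nat.le_succ _)) (le_max_right _ _)
  have hsub : Finset.Ico N₀ K ⊆ Finset.Ico N₀ (max N₀ (t.sup id + 1)) :=
    Finset.Ico_subset_Ico le_rfl hKle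
  refine le_trans (le_of_lt hKe) ?_
  exact Finset.sum_le_sum_of_subset_of_nonneg hsub (fun _ _ _ => abs_nonneg _)

lemma frac_rep (d : ℕ) (v : ℕ → EuclideanSpace ℝ (Fin d)) (s : Finset ℕ)
    (t : EuclideanSpace ℝ (Fin d))
    (hcap : ∀ e : EuclideanSpace ℝ (Fin d), ‖e‖ = 1 → ‖t‖ ≤ ∑ n ∈ s, |⟪v n, e⟫|) :
    ∃ γ : ℕ → ℝ, (∀ i, |γ i| ≤ 1) ∧ ∑ n ∈ s, γ n • v n = t := by
  classical
  -- the linear map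
  set L : (ℕ → ℝ) →ₗ[ℝ] EuclideanSpace ℝ (Fin d) :=
    ∑ n ∈ s, (LinearMap.proj n).smulRight (v n) with hL
  have hLapp : ∀ c : ℕ → ℝ, L c = ∑ n ∈ s, c n • v n := by
    intro c
    rw [hL]
    simp [LinearMap.sum_apply]
  -- the box
  set box : Set (ℕ → ℝ) := Set.pi Set.univ (fun _ : ℕ => Set.Icc (-1 : ℝ) 1) with hbox
  have hboxconv : Convex ℝ box := convex_pi (fun _ _ => convex_Icc _ _)
  have hboxcomp : IsCompact box := isCompact_univ_pi (fun _ => isCompact_Icc)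
  have hLcont : Continuous L := by
    have hfn : ⇑L = fun c : ℕ → ℝ => ∑ n ∈ s, c n • v n := funext hLapp
    rw [hfn]
    exact continuous_finset_sum _ fun n _ =>
      ((continuous_apply n).smul continuous_const)
  set Z : Set (EuclideanSpace ℝ (Fin d)) := L '' box with hZ
  have hZconv : Convex ℝ Z := hboxconv.linear_image L
  have hZcomp : IsCompact Z := hboxcomp.image hLcont
  have hZclosed : IsClosed Z := hZcomp.isClosed
  by_cases htZ : t ∈ Z
  · obtain ⟨c, hc, hct⟩ := htZ
    refine ⟨c, ?_, by rw [← hLapp]; exact hct⟩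
    intro i
    have := hc i (Set.mem_univ i)
    rw [abs_le]
    exact ⟨this.1, this.2⟩
  · exfalso
    obtain ⟨f, u, hfZ, hft⟩ := geometric_hahn_banach_closed_point hZconv hZclosed htZ
    have h0Z : (0 : EuclideanSpace ℝ (Fin d)) ∈ Z := by
      refine ⟨0, ?_, ?_⟩
      · intro i _; exact ⟨by norm_num, by norm_num⟩
      · rw [hLapp]; simp
    have hft0 : (0 : ℝ) < f t := lt_trans (by simpa using hfZ 0 h0Z) hft
    -- the sign point
    set c : ℕ → ℝ := fun n => if 0 ≤ f (v n) then (1 : ℝ) else -1 with hc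
    have hcbox : c ∈ box := by
      intro i _
      by_cases h : 0 ≤ f (v i) <;> simp [hc, h]
    have hfc : f (L c) = ∑ n ∈ s, |f (v n)| := by
      rw [hLapp, map_sum]
      refine Finset.sum_congr rfl fun n _ => ?_
      rw [map_smul]
      by_cases h : 0 ≤ f (v n)
      · simp [hc, h, abs_of_nonneg h]
      · push_neg at h
        simp [hc, not_le.mpr h, abs_of_neg h]
    have habs : ∑ n ∈ s, |f (v n)| < f t := by
      rw [← hfc]
      exact lt_trans (hfZ _ ⟨c, hcbox, rfl⟩) hft
    -- Riesz representation
    set w : EuclideanSpace ℝ (Fin d) :=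
      (InnerProductSpace.toDual ℝ (EuclideanSpace ℝ (Fin d))).symm f with hw
    have hwf : ∀ y, ⟪w, y⟫ = f y := fun y => InnerProductSpace.toDual_symm_apply
    have hwne : w ≠ 0 := by
      intro h
      rw [← hwf t, h] at hft0
      simp at hft0
    set e : EuclideanSpace ℝ (Fin d) := ‖w‖⁻¹ • w with he
    have henorm : ‖e‖ = 1 := norm_smul_inv_norm hwne
    have hwpos : (0 : ℝ) < ‖w‖ := norm_pos_iff.mpr hwne
    have hkey := hcap e henorm
    have hsum : ∑ n ∈ s, |⟪v n, e⟫| = ‖w‖⁻¹ * ∑ n ∈ s, |f (v n)| := by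
      rw [Finset.mul_sum]
      refine Finset.sum_congr rfl fun n _ => ?_
      rw [he, real_inner_smul_right, abs_mul, abs_of_nonneg (by positivity : (0:ℝ) ≤ ‖w‖⁻¹),
        real_inner_comm, hwf]
    have hineq : ‖t‖ * ‖w‖ ≤ ∑ n ∈ s, |f (v n)| := by
      have := hkey
      rw [hsum] at this
      have h2 := mul_le_mul_of_nonneg_right this (le_of_lt hwpos)
      calc ‖t‖ * ‖w‖ ≤ (‖w‖⁻¹ * ∑ n ∈ s, |f (v n)|) * ‖w‖ := h2
        _ = ∑ n ∈ s, |f (v n)| := by field_simp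
    have hCS : f t ≤ ‖w‖ * ‖t‖ := by
      rw [← hwf t]
      exact real_inner_le_norm w t
    nlinarith [habs, hineq, hCS]

lemma prefix_bound (d m k : ℕ) (v : ℕ → EuclideanSpace ℝ (Fin d)) (η : ℝ)
    (hv : ∀ i, i < m → ‖v i‖ ≤ η) (γ θ : ℕ → ℝ)
    (hθ : ∀ i, θ i = 1 ∨ θ i = -1) (hγ : ∀ i, |γ i| ≤ 1)
    (hagree : ∀ i, (γ i = 1 ∨ γ i = -1) → θ i = γ i) (hk : k ≤ m) :
    ‖∑ i ∈ Finset.range k, (θ i - γ i) • v i‖ ≤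
      2 * η * (((Finset.range m).filter (fun i => γ i ≠ 1 ∧ γ i ≠ -1) ∩ Finset.range k).card) := by
  classical
  set G := (Finset.range m).filter (fun i => γ i ≠ 1 ∧ γ i ≠ -1) with hG
  have hsum : ∑ i ∈ Finset.range k, (θ i - γ i) • v i
      = ∑ i ∈ G ∩ Finset.range k, (θ i - γ i) • v i := by
    refine (Finset.sum_subset (Finset.inter_subset_right) ?_).symm
    intro i hi hni
    have hiG : i ∉ G := fun h => hni (Finset.mem_inter.mpr ⟨h, hi⟩)
    have him : i < m := lt_of_lt_of_le (Finset.mem_range.mp hi) hk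
    have : γ i = 1 ∨ γ i = -1 := by
      by_contra h
      push_neg at h
      exact hiG (Finset.mem_filter.mpr ⟨Finset.mem_range.mpr him, h⟩)
    rw [hagree i this, sub_self, zero_smul]
  rw [hsum]
  refine le_trans (norm_sum_le _ _) ?_
  have hterm : ∀ i ∈ G ∩ Finset.range k, ‖(θ i - γ i) • v i‖ ≤ 2 * η := by
    intro i hi
    have hiG := Finset.mem_inter.mp hi |>.1
    have him : i < m := Finset.mem_range.mp (Finset.mem_filter.mp hiG).1
    rw [norm_smul]
    have h1 : |θ i - γ i| ≤ 2 := by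
      rcases hθ i with h | h <;> rw [h] <;>
        (have := abs_le.mp (hγ i); rw [abs_le]; constructor <;> linarith [this.1, this.2])
    have : ‖θ i - γ i‖ = |θ i - γ i| := Real.norm_eq_abs _
    rw [this]
    exact mul_le_mul h1 (hv i him) (norm_nonneg _) (by norm_num)
  refine le_trans (Finset.sum_le_sum hterm) ?_
  rw [Finset.sum_const, nsmul_eq_mul, mul_comm]

lemma roundCore (d : ℕ) (v : ℕ → EuclideanSpace ℝ (Fin d)) (m : ℕ) (η : ℝ)
    (hv : ∀ i, i < m → ‖v i‖ ≤ η) :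
    ∀ c : ℕ, ∀ γ : ℕ → ℝ, (∀ i, |γ i| ≤ 1) →
      ((Finset.range m).filter (fun i => γ i ≠ 1 ∧ γ i ≠ -1)).card = c →
      ∃ θ : ℕ → ℝ, (∀ i, θ i = 1 ∨ θ i = -1) ∧
        (∀ i, (γ i = 1 ∨ γ i = -1) → θ i = γ i) ∧
        ∀ k, k ≤ m →
          ‖∑ i ∈ Finset.range k, (θ i - γ i) • v i‖ ≤
            2 * η * ((min d (((Finset.range m).filter (fun i => γ i ≠ 1 ∧ γ i ≠ -1) ∩
              Finset.range k).card) : ℕ) : ℝ) := by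
  classical
  intro c
  induction c using Nat.strong_induction_on with
  | _ c IH =>
  intro γ hγ hcard
  by_cases hcd : c ≤ d
  · -- base case: few fractional coordinates, round them all
    refine ⟨fun i => if γ i = -1 then -1 else 1, fun i => ?_, fun i hi => ?_, fun k hk => ?_⟩
    · by_cases h : γ i = -1 <;> simp [h]
    · show (if γ i = -1 then (-1:ℝ) else 1) = γ i
      rcases hi with h | h
      · have hne : γ i ≠ -1 := by rw [h]; norm_num
        rw [if_neg hne, h]
      · rw [if_pos h, h]
    · have hb := prefix_bound d m k v η hv γ (fun i => if γ i = -1 then -1 else 1)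
        (fun i => by by_cases h : γ i = -1 <;> simp [h])
        hγ (fun i hi => by
          show (if γ i = -1 then (-1:ℝ) else 1) = γ i
          rcases hi with h | h
          · have hne : γ i ≠ -1 := by rw [h]; norm_num
            rw [if_neg hne, h]
          · rw [if_pos h, h]) hk
      refine le_trans hb ?_
      have hle : (((Finset.range m).filter (fun i => γ i ≠ 1 ∧ γ i ≠ -1) ∩
          Finset.range k).card) ≤ d := by
        refine le_trans (le_trans (Finset.card_le_card Finset.inter_subset_left) ?_) hcd
        exact le_of_eq hcard
      rw [min_eq_right hle]
  · -- inductive step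
    push_neg at hcd
    set G := (Finset.range m).filter (fun i => γ i ≠ 1 ∧ γ i ≠ -1) with hGdef
    have hGcard : G.card = c := hcard
    have hle : d + 1 ≤ c := hcd
    have hηnn : 0 ≤ η := by
      have hGne : G.Nonempty := by
        rw [← Finset.card_pos, hGcard]; omega
      obtain ⟨i, hi⟩ := hGne
      have : i < m := Finset.mem_range.mp (Finset.mem_filter.mp hi).1
      exact le_trans (norm_nonneg _) (hv i this)
    set o := G.orderIsoOfFin hGcard with ho
    set σ : Fin (d + 1) → ℕ := fun j => (o (Fin.castLE hle j) : ℕ) with hσ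
    have hσG : ∀ j, σ j ∈ G := fun j => (o (Fin.castLE hle j)).2
    have hσmono : StrictMono σ := by
      intro j j' hjj
      have h1 : Fin.castLE hle j < Fin.castLE hle j' := by
        rw [Fin.lt_def] at hjj ⊢
        simp only [Fin.coe_castLE]
        exact hjj
      exact Subtype.coe_lt_coe.mpr (o.strictMono h1)
    have hσinj : Function.Injective σ := hσmono.injective
    have hfrac : ∀ i ∈ G, -1 < γ i ∧ γ i < 1 := by
      intro i hi
      obtain ⟨_, h1, h2⟩ := Finset.mem_filter.mp hi
      have := abs_le.mp (hγ i)
      exact ⟨lt_of_le_of_ne this.1 (Ne.symm h2), lt_of_le_of_ne this.2 h1⟩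
    -- the kernel element
    set L : (Fin (d + 1) → ℝ) →ₗ[ℝ] EuclideanSpace ℝ (Fin d) :=
      ∑ j : Fin (d + 1), (LinearMap.proj j).smulRight (v (σ j)) with hL
    have hLapp : ∀ z : Fin (d + 1) → ℝ, L z = ∑ j : Fin (d + 1), z j • v (σ j) := by
      intro z; rw [hL]; simp [LinearMap.sum_apply]
    have hninj : ¬ Function.Injective L := by
      intro hinj
      have h1 := LinearMap.finrank_le_finrank_of_injective hinj
      rw [finrank_euclideanSpace_fin] at h1
      have h2 : Module.finrank ℝ (Fin (d + 1) → ℝ) = d + 1 := by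
        simp [Module.finrank_fintype_fun_eq_card]
      omega
    obtain ⟨z₁, z₂, hz12, hzne⟩ := Function.not_injective_iff.mp hninj
    set z : Fin (d + 1) → ℝ := z₁ - z₂ with hz
    have hLz : L z = 0 := by rw [hz, map_sub, hz12, sub_self]
    have hzne0 : z ≠ 0 := sub_ne_zero.mpr hzne
    -- push z to ℕ
    set z' : ℕ → ℝ := fun i => ∑ j ∈ Finset.univ.filter (fun j : Fin (d + 1) => σ j = i), z j
      with hz'
    have hz'σ : ∀ j, z' (σ j) = z j := by
      intro j
      have hfil : Finset.univ.filter (fun j' : Fin (d + 1) => σ j' = σ j) = {j} := by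
        ext j'
        simp only [Finset.mem_filter, Finset.mem_univ, true_and, Finset.mem_singleton]
        exact ⟨fun h => hσinj h, fun h => by rw [h]⟩
      simp only [hz']
      rw [hfil, Finset.sum_singleton]
    have hz'0 : ∀ i, (∀ j, σ j ≠ i) → z' i = 0 := by
      intro i hi
      simp only [hz']
      rw [Finset.filter_false_of_mem (fun j _ => hi j), Finset.sum_empty]
    -- the step size
    set T : Finset (Fin (d + 1)) := Finset.univ.filter (fun j => z j ≠ 0) with hT
    have hTne : T.Nonempty := by
      obtain ⟨j, hj⟩ := Function.ne_iff.mp hzne0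
      exact ⟨j, Finset.mem_filter.mpr ⟨Finset.mem_univ _, hj⟩⟩
    set bnd : Fin (d + 1) → ℝ :=
      fun j => if 0 < z j then (1 - γ (σ j)) / z j else (-1 - γ (σ j)) / z j with hbnd
    obtain ⟨j₀, hj₀T, hj₀min⟩ := T.exists_min_image bnd hTne
    set ts : ℝ := bnd j₀ with hts
    have hbpos : ∀ j ∈ T, 0 < bnd j := by
      intro j hj
      have hzj : z j ≠ 0 := (Finset.mem_filter.mp hj).2
      obtain ⟨hlo, hhi⟩ := hfrac _ (hσG j)
      simp only [hbnd]
      by_cases hp : 0 < z j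
      · rw [if_pos hp]; exact div_pos (by linarith) hp
      · rw [if_neg hp]
        have hneg : z j < 0 := lt_of_le_of_ne (not_lt.mp hp) hzj
        exact div_pos_of_neg_of_neg (by linarith) hneg
    have htspos : 0 < ts := hbpos j₀ hj₀T
    -- the moved coefficients
    set γ2 : ℕ → ℝ := fun i => γ i + ts * z' i with hγ2
    have hγ2out : ∀ i, i ∉ G → γ2 i = γ i := by
      intro i hi
      have : ∀ j, σ j ≠ i := fun j hji => hi (hji ▸ hσG j)
      simp only [hγ2]
      rw [hz'0 i this, mul_zero, add_zero]
    have hγ2σ : ∀ j, γ2 (σ j) = γ (σ j) + ts * z j := by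
      intro j; simp only [hγ2]; rw [hz'σ]
    have hγ2mem : ∀ j : Fin (d + 1), -1 ≤ γ2 (σ j) ∧ γ2 (σ j) ≤ 1 := by
      intro j
      rw [hγ2σ]
      obtain ⟨hlo, hhi⟩ := hfrac _ (hσG j)
      rcases lt_trichotomy (z j) 0 with hneg | hzero | hpos
      · have hjT : j ∈ T := by simp [hT, ne_of_lt hneg]
        have h1 : ts ≤ bnd j := hj₀min j hjT
        have h2 : bnd j = (-1 - γ (σ j)) / z j := by
          simp only [hbnd]; rw [if_neg (not_lt.mpr (le_of_lt hneg))]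
        have h3 : bnd j * z j ≤ ts * z j := mul_le_mul_of_nonpos_right h1 (le_of_lt hneg)
        rw [h2, div_mul_cancel₀ _ (ne_of_lt hneg)] at h3
        constructor
        · linarith
        · nlinarith
      · rw [hzero, mul_zero, add_zero]; exact ⟨le_of_lt hlo, le_of_lt hhi⟩
      · have hjT : j ∈ T := by simp [hT, ne_of_gt hpos]
        have h1 : ts ≤ bnd j := hj₀min j hjT
        have h2 : bnd j = (1 - γ (σ j)) / z j := by
          simp only [hbnd]; rw [if_pos hpos]
        have h3 : ts * z j ≤ bnd j * z j := mul_le_mul_of_nonneg_right h1 (le_of_lt hpos)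
        rw [h2, div_mul_cancel₀ _ (ne_of_gt hpos)] at h3
        constructor
        · nlinarith
        · linarith
    have hγ2abs : ∀ i, |γ2 i| ≤ 1 := by
      intro i
      by_cases hiG : i ∈ G
      · by_cases hiσ : ∃ j, σ j = i
        · obtain ⟨j, rfl⟩ := hiσ
          rw [abs_le]; exact hγ2mem j
        · push_neg at hiσ
          simp only [hγ2]
          rw [hz'0 i hiσ, mul_zero, add_zero]; exact hγ i
      · rw [hγ2out i hiG]; exact hγ i
    have hγ2j₀ : γ2 (σ j₀) = 1 ∨ γ2 (σ j₀) = -1 := by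
      have hzj₀ : z j₀ ≠ 0 := (Finset.mem_filter.mp hj₀T).2
      rw [hγ2σ, hts]
      by_cases hp : 0 < z j₀
      · left
        simp only [hbnd]
        rw [if_pos hp, div_mul_cancel₀ _ (ne_of_gt hp)]; ring
      · right
        simp only [hbnd]
        rw [if_neg hp, div_mul_cancel₀ _ hzj₀]; ring
    -- the new fractional set is smaller
    set G2 := (Finset.range m).filter (fun i => γ2 i ≠ 1 ∧ γ2 i ≠ -1) with hG2def
    have hG2sub : G2 ⊆ G := by
      intro i hi
      obtain ⟨him, h1, h2⟩ := Finset.mem_filter.mp hi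
      by_contra hiG
      rw [hγ2out i hiG] at h1 h2
      exact hiG (Finset.mem_filter.mpr ⟨him, h1, h2⟩)
    have hj₀G2 : σ j₀ ∉ G2 := by
      intro hmem
      obtain ⟨_, h1, h2⟩ := Finset.mem_filter.mp hmem
      rcases hγ2j₀ with h | h
      · exact h1 h
      · exact h2 h
    have hG2ss : G2 ⊂ G := ⟨hG2sub, fun hsub => hj₀G2 (hsub (hσG j₀))⟩
    have hG2lt : G2.card < c := hGcard ▸ Finset.card_lt_card hG2ss
    obtain ⟨θ, hθsigns, hθagree, hθbound⟩ := IH G2.card hG2lt γ2 hγ2abs rfl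
    have hagreeγ : ∀ i, (γ i = 1 ∨ γ i = -1) → θ i = γ i := by
      intro i hi
      have hiG : i ∉ G := by
        intro hmem
        obtain ⟨_, h1, h2⟩ := Finset.mem_filter.mp hmem
        rcases hi with h | h
        · exact h1 h
        · exact h2 h
      have h2 := hγ2out i hiG
      rw [← h2] at hi ⊢
      exact hθagree i hi
    refine ⟨θ, hθsigns, hagreeγ, fun k hk => ?_⟩
    set p : ℕ := σ (Fin.last d) with hp
    have hσlep : ∀ j, σ j ≤ p := fun j => hσmono.monotone (Fin.le_last j)
    by_cases hkp : k ≤ p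
    · -- few fractional indices below k : direct estimate
      have hsubim : G ∩ Finset.range k ⊆
          (Finset.univ.filter (fun j : Fin (d + 1) => j ≠ Fin.last d)).image σ := by
        intro i hi
        obtain ⟨hiG, hik⟩ := Finset.mem_inter.mp hi
        have hik' : i < p := lt_of_lt_of_le (Finset.mem_range.mp hik) hkp
        set l : Fin c := o.symm ⟨i, hiG⟩ with hl
        have hol : (o l : ℕ) = i := by rw [hl]; simp
        have hlltd : (l : ℕ) < d := by
          by_contra hge
          push_neg at hge
          have h1 : Fin.castLE hle (Fin.last d) ≤ l := by
            simpa [Fin.le_def] using hge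
          have h2 : (o (Fin.castLE hle (Fin.last d)) : ℕ) ≤ (o l : ℕ) :=
            Subtype.coe_le_coe.mpr (o.monotone h1)
          rw [hol] at h2
          exact absurd h2 (not_le.mpr hik')
        refine Finset.mem_image.mpr ⟨⟨(l : ℕ), by omega⟩, ?_, ?_⟩
        · simp [Fin.ext_iff]
          omega
        · simp only [hσ]
          have : Fin.castLE hle ⟨(l : ℕ), by omega⟩ = l := by
            rw [Fin.ext_iff]; simp
          rw [this, hol]
      have hcardle : (G ∩ Finset.range k).card ≤ d := by
        refine le_trans (Finset.card_le_card hsubim) (le_trans Finset.card_image_le ?_)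
        have : (Finset.univ.filter (fun j : Fin (d + 1) => j ≠ Fin.last d)) =
            Finset.univ.erase (Fin.last d) := by
          ext j; simp [Finset.mem_erase, and_comm]
        rw [this, Finset.card_erase_of_mem (Finset.mem_univ _)]
        simp
      have hb := prefix_bound d m k v η hv γ θ hθsigns hγ hagreeγ hk
      refine le_trans hb ?_
      rw [min_eq_right hcardle]
    · -- the perturbation is invisible in long prefixes
      push_neg at hkp
      have hzerosum : ∑ i ∈ Finset.range k, (γ2 i - γ i) • v i = 0 := by
        have h1 : ∀ i ∈ Finset.range k, (γ2 i - γ i) • v i = (ts * z' i) • v i := by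
          intro i _
          simp only [hγ2]
          congr 1
          ring
        rw [Finset.sum_congr rfl h1]
        have h2 : ∀ i ∈ Finset.range k, (ts * z' i) • v i = ts • (z' i • v i) := by
          intro i _; rw [mul_smul]
        rw [Finset.sum_congr rfl h2, ← Finset.smul_sum]
        have himsub : (Finset.univ.image σ : Finset ℕ) ⊆ Finset.range k := by
          intro i hi
          obtain ⟨j, _, rfl⟩ := Finset.mem_image.mp hi
          exact Finset.mem_range.mpr (lt_of_le_of_lt (hσlep j) hkp)
        have h3 : ∑ i ∈ Finset.range k, z' i • v i = ∑ i ∈ Finset.univ.image σ, z' i • v i := by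
          refine (Finset.sum_subset himsub ?_).symm
          intro i _ hni
          have : ∀ j, σ j ≠ i := by
            intro j hji
            exact hni (Finset.mem_image.mpr ⟨j, Finset.mem_univ _, hji⟩)
          rw [hz'0 i this, zero_smul]
        rw [h3, Finset.sum_image (fun j _ j' _ h => hσinj h)]
        have h4 : ∑ j : Fin (d + 1), z' (σ j) • v (σ j) = ∑ j : Fin (d + 1), z j • v (σ j) := by
          refine Finset.sum_congr rfl fun j _ => ?_
          rw [hz'σ]
        rw [h4, ← hLapp, hLz, smul_zero]
      have hsplit : ∑ i ∈ Finset.range k, (θ i - γ i) • v i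
          = (∑ i ∈ Finset.range k, (θ i - γ2 i) • v i)
            + ∑ i ∈ Finset.range k, (γ2 i - γ i) • v i := by
        rw [← Finset.sum_add_distrib]
        refine Finset.sum_congr rfl fun i _ => ?_
        rw [← add_smul]
        congr 1
        ring
      rw [hsplit, hzerosum, add_zero]
      refine le_trans (hθbound k hk) ?_
      have hmono : (G2 ∩ Finset.range k).card ≤ (G ∩ Finset.range k).card :=
        Finset.card_le_card (Finset.inter_subset_inter_right hG2sub)
      have : (min d (G2 ∩ Finset.range k).card : ℕ) ≤ min d (G ∩ Finset.range k).card :=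
        min_le_min le_rfl hmono
      have hcast : ((min d (G2 ∩ Finset.range k).card : ℕ) : ℝ)
          ≤ ((min d (G ∩ Finset.range k).card : ℕ) : ℝ) := Nat.cast_le.mpr this
      have h2η : 0 ≤ 2 * η := by linarith
      exact mul_le_mul_of_nonneg_left hcast h2η

lemma roundSeg (d : ℕ) (a : ℕ → EuclideanSpace ℝ (Fin d)) (A B : ℕ) (η : ℝ) (hη : 0 ≤ η)
    (hv : ∀ n, A ≤ n → n < B → ‖a n‖ ≤ η) (γ : ℕ → ℝ) (hγ : ∀ n, |γ n| ≤ 1) :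
    ∃ θ : ℕ → ℝ, (∀ n, θ n = 1 ∨ θ n = -1) ∧
      ∀ k, A ≤ k → k ≤ B → ‖∑ n ∈ Finset.Ico A k, (θ n - γ n) • a n‖ ≤ 2 * η * d := by
  classical
  obtain ⟨θ', hθ'signs, _, hθ'bound⟩ := roundCore d (fun i => a (A + i)) (B - A) η
    (fun i hi => hv (A + i) (Nat.le_add_right _ _) (by omega))
    (((Finset.range (B - A)).filter
      (fun i => γ (A + i) ≠ 1 ∧ γ (A + i) ≠ -1)).card)
    (fun i => γ (A + i)) (fun i => hγ (A + i)) rfl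
  refine ⟨fun n => if A ≤ n then θ' (n - A) else 1, fun n => by
    show (if A ≤ n then θ' (n - A) else 1) = 1 ∨ (if A ≤ n then θ' (n - A) else 1) = -1
    by_cases h : A ≤ n
    · rw [if_pos h]; exact hθ'signs _
    · rw [if_neg h]; left; rfl, ?_⟩
  intro k hAk hkB
  have heq : ∑ n ∈ Finset.Ico A k, ((if A ≤ n then θ' (n - A) else 1) - γ n) • a n
      = ∑ i ∈ Finset.range (k - A), (θ' i - γ (A + i)) • a (A + i) := by
    rw [Finset.sum_Ico_eq_sum_range]
    refine Finset.sum_congr rfl fun i _ => ?_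
    rw [if_pos (Nat.le_add_right _ _), Nat.add_sub_cancel_left]
  rw [heq]
  refine le_trans (hθ'bound (k - A) (by omega)) ?_
  have h1 : ((min d (((Finset.range (B - A)).filter
      (fun i => γ (A + i) ≠ 1 ∧ γ (A + i) ≠ -1) ∩ Finset.range (k - A)).card) : ℕ) : ℝ) ≤ d :=
    by exact_mod_cast min_le_left _ _
  calc 2 * η * ((min d _ : ℕ) : ℝ) ≤ 2 * η * d :=
        mul_le_mul_of_nonneg_left h1 (by linarith)
    _ = 2 * η * d := rfl

def tailBlocks (N : ℕ) (T : ℕ → ℕ) : ℕ → ℕ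
  | 0 => N
  | k + 1 => max (tailBlocks N T k + 1) (T (k + 1))

lemma tail_exists (d : ℕ) (a : ℕ → EuclideanSpace ℝ (Fin d)) (N : ℕ) (c : ℝ) (hc : 0 < c)
    (hN : ∀ n, N ≤ n → ‖a n‖ ≤ c)
    (hsm : ∀ k : ℕ, ∃ T : ℕ, ∀ n, T ≤ n → ‖a n‖ ≤ c / 2 ^ k) :
    ∃ ε : ℕ → ℝ, (∀ n, ε n = 1 ∨ ε n = -1) ∧ ∃ y : EuclideanSpace ℝ (Fin d),
      ‖y‖ ≤ 8 * ((d : ℝ) + 1) * c ∧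
      Tendsto (fun M => ∑ n ∈ Finset.Ico N M, ε n • a n) atTop (nhds y) := by
  classical
  choose T hT using hsm
  set P : ℕ → ℕ := tailBlocks N T with hP
  have hP0 : P 0 = N := rfl
  have hPsucc : ∀ k, P (k + 1) = max (P k + 1) (T (k + 1)) := fun k => rfl
  have hPlt : ∀ k, P k < P (k + 1) := by
    intro k; rw [hPsucc]; exact lt_of_lt_of_le (Nat.lt_succ_self _) (le_max_left _ _)
  have hPmono : StrictMono P := strictMono_nat_of_lt_succ hPlt
  have hPge : ∀ k, k + N ≤ P k := by
    intro k
    induction k with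
    | zero => simp [hP0]
    | succ k ih => have := hPlt k; omega
  have hPN : ∀ k, N ≤ P k := fun k => le_trans (Nat.le_add_left _ _) (hPge k)
  have hsmall : ∀ k, ∀ n, P k ≤ n → ‖a n‖ ≤ c / 2 ^ k := by
    intro k n hn
    cases k with
    | zero => simpa using hN n (le_trans (le_of_eq hP0.symm) hn)
    | succ k =>
        refine hT (k + 1) n (le_trans ?_ hn)
        rw [hPsucc]; exact le_max_right _ _
  -- choose the signs on each block
  have hblocksigns : ∀ k : ℕ, ∃ θ : ℕ → ℝ, (∀ n, θ n = 1 ∨ θ n = -1) ∧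
      ∀ j, P k ≤ j → j ≤ P (k + 1) →
        ‖∑ n ∈ Finset.Ico (P k) j, θ n • a n‖ ≤ 2 * (c / 2 ^ k) * d := by
    intro k
    obtain ⟨θ, hθs, hθb⟩ := roundSeg d a (P k) (P (k + 1)) (c / 2 ^ k)
      (le_of_lt (by positivity)) (fun n hn _ => hsmall k n hn) (fun _ => 0)
      (fun _ => by norm_num)
    refine ⟨θ, hθs, fun j hj1 hj2 => ?_⟩
    have := hθb j hj1 hj2
    simpa using this
  choose Θ hΘs hΘb using hblocksigns
  set K : ℕ → ℕ := fun n => Nat.findGreatest (fun k => P k ≤ n) n with hK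
  set ε : ℕ → ℝ := fun n => Θ (K n) n with hε
  have hεsigns : ∀ n, ε n = 1 ∨ ε n = -1 := fun n => hΘs _ n
  have hKspec : ∀ n, N ≤ n → P (K n) ≤ n := by
    intro n hn
    exact Nat.findGreatest_spec (P := fun k => P k ≤ n) (m := 0) (Nat.zero_le n)
      (show P 0 ≤ n from hP0 ▸ hn)
  have hKle : ∀ k n, P k ≤ n → k ≤ K n := by
    intro k n hkn
    exact Nat.le_findGreatest (le_trans (le_trans (Nat.le_add_right k N) (hPge k)) hkn) hkn
  have hKeq : ∀ k n, P k ≤ n → n < P (k + 1) → K n = k := by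
    intro k n h1 h2
    refine le_antisymm ?_ (hKle k n h1)
    by_contra hlt
    push_neg at hlt
    have : P (k + 1) ≤ P (K n) := hPmono.monotone hlt
    have hNn : N ≤ n := le_trans (hPN k) h1
    have := le_trans this (hKspec n hNn)
    omega
  have hεblock : ∀ k n, P k ≤ n → n < P (k + 1) → ε n = Θ k n := by
    intro k n h1 h2
    rw [hε]; simp only []
    rw [hKeq k n h1 h2]
  -- partial sums
  set S : ℕ → EuclideanSpace ℝ (Fin d) := fun M => ∑ n ∈ Finset.Ico N M, ε n • a n with hS
  have hSdiff : ∀ k j, P k ≤ j → ‖S j - S (P k)‖ = ‖∑ n ∈ Finset.Ico (P k) j, ε n • a n‖ := by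
    intro k j hj
    have hsplit : S (P k) + ∑ n ∈ Finset.Ico (P k) j, ε n • a n = S j := by
      rw [hS]
      exact Finset.sum_Ico_consecutive _ (hPN k) hj
    rw [← hsplit]
    simp
  have hblock : ∀ k j, P k ≤ j → j ≤ P (k + 1) → ‖S j - S (P k)‖ ≤ 2 * (c / 2 ^ k) * d := by
    intro k j h1 h2
    rw [hSdiff k j h1]
    have hcongr : ∑ n ∈ Finset.Ico (P k) j, ε n • a n
        = ∑ n ∈ Finset.Ico (P k) j, Θ k n • a n := by
      refine Finset.sum_congr rfl fun n hn => ?_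
      obtain ⟨hn1, hn2⟩ := Finset.mem_Ico.mp hn
      rw [hεblock k n hn1 (lt_of_lt_of_le hn2 h2)]
    rw [hcongr]
    exact hΘb k j h1 h2
  have hchain : ∀ k l, ‖S (P (k + l)) - S (P k)‖ ≤ 4 * d * c / 2 ^ k - 4 * d * c / 2 ^ (k + l) := by
    intro k l
    induction l with
    | zero => simp
    | succ l ih =>
        have h1 : ‖S (P (k + (l + 1))) - S (P k)‖
            ≤ ‖S (P (k + l + 1)) - S (P (k + l))‖ + ‖S (P (k + l)) - S (P k)‖ := by
          have : S (P (k + (l + 1))) - S (P k)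
              = (S (P (k + l + 1)) - S (P (k + l))) + (S (P (k + l)) - S (P k)) := by
            rw [show k + (l + 1) = k + l + 1 from rfl]; abel
          rw [this]; exact norm_add_le _ _
        have h2 : ‖S (P (k + l + 1)) - S (P (k + l))‖ ≤ 2 * (c / 2 ^ (k + l)) * d :=
          hblock (k + l) (P (k + l + 1)) (le_of_lt (hPlt _)) le_rfl
        have h3 : (4 : ℝ) * d * c / 2 ^ (k + (l + 1)) = 4 * d * c / 2 ^ (k + l) / 2 := by
          rw [show k + (l + 1) = (k + l) + 1 from rfl, pow_succ]; ring
        have h4 : (2 : ℝ) * (c / 2 ^ (k + l)) * d = 4 * d * c / 2 ^ (k + l) / 2 := by ring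
        calc ‖S (P (k + (l + 1))) - S (P k)‖
            ≤ 2 * (c / 2 ^ (k + l)) * d + (4 * d * c / 2 ^ k - 4 * d * c / 2 ^ (k + l)) := by
              refine le_trans h1 ?_; exact add_le_add h2 ih
          _ ≤ 4 * d * c / 2 ^ k - 4 * d * c / 2 ^ (k + (l + 1)) := by
              rw [h3, h4]
              have hpos : (0 : ℝ) < 2 ^ (k + l) := by positivity
              have : (0:ℝ) ≤ 4 * d * c / 2 ^ (k + l) / 2 := by positivity
              linarith
  have hgen : ∀ k M, P k ≤ M → ‖S M - S (P k)‖ ≤ 6 * d * c / 2 ^ k := by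
    intro k M hM
    have hNM : N ≤ M := le_trans (hPN k) hM
    have hKM : k ≤ K M := hKle k M hM
    have h1 : ‖S M - S (P (K M))‖ ≤ 2 * (c / 2 ^ (K M)) * d := by
      refine hblock (K M) M (hKspec M hNM) ?_
      by_cases h : K M + 1 ≤ M
      · by_contra hlt
        push_neg at hlt
        have := Nat.findGreatest_is_greatest (Nat.lt_succ_self (K M)) h
        exact this (le_of_lt hlt)
      · push_neg at h
        refine le_of_lt (lt_of_lt_of_le h ?_)
        exact le_trans (Nat.le_add_right _ N) (hPge (K M + 1))
    have h2 : ‖S (P (K M)) - S (P k)‖ ≤ 4 * d * c / 2 ^ k - 4 * d * c / 2 ^ (K M) := by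
      have := hchain k (K M - k)
      rwa [Nat.add_sub_cancel' hKM] at this
    have h3 : (2:ℝ) * (c / 2 ^ (K M)) * d ≤ 2 * (c / 2 ^ k) * d := by
      have hle : (2:ℝ) ^ k ≤ 2 ^ (K M) := by
        exact pow_le_pow_right₀ one_le_two hKM
      have h2k : (0:ℝ) < 2 ^ k := by positivity
      have h2K : (0:ℝ) < 2 ^ (K M) := by positivity
      have : c / 2 ^ (K M) ≤ c / 2 ^ k := by
        apply div_le_div_of_nonneg_left (le_of_lt hc) h2k hle
      nlinarith [Nat.cast_nonneg (α := ℝ) d]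
    have hsplit : S M - S (P k) = (S M - S (P (K M))) + (S (P (K M)) - S (P k)) := by abel
    calc ‖S M - S (P k)‖ ≤ ‖S M - S (P (K M))‖ + ‖S (P (K M)) - S (P k)‖ := by
          rw [hsplit]; exact norm_add_le _ _
      _ ≤ 2 * (c / 2 ^ k) * d + (4 * d * c / 2 ^ k - 4 * d * c / 2 ^ (K M)) :=
          add_le_add (le_trans h1 h3) h2
      _ ≤ 6 * d * c / 2 ^ k := by
          have : (0:ℝ) ≤ 4 * d * c / 2 ^ (K M) := by positivity
          have heq : (2:ℝ) * (c / 2 ^ k) * d = 2 * d * c / 2 ^ k := by ring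
          have heq2 : (2:ℝ) * d * c / 2 ^ k + 4 * d * c / 2 ^ k = 6 * d * c / 2 ^ k := by ring
          linarith
  -- Cauchy and convergence
  have hcauchy : CauchySeq S := by
    rw [Metric.cauchySeq_iff']
    intro e he
    have hpow : ∃ k : ℕ, 6 * ((d:ℝ) + 1) * c / 2 ^ k < e := by
      have h2 : Tendsto (fun k : ℕ => (2:ℝ) ^ k) atTop atTop :=
        tendsto_pow_atTop_atTop_of_one_lt one_lt_two
      obtain ⟨k, hk⟩ := (h2.eventually (eventually_gt_atTop (6 * ((d:ℝ) + 1) * c / e))).exists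
      refine ⟨k, ?_⟩
      rw [div_lt_iff₀ (by positivity : (0:ℝ) < 2 ^ k)]
      rw [div_lt_iff₀ he] at hk
      linarith
    obtain ⟨k, hk⟩ := hpow
    refine ⟨P k, fun M hM => ?_⟩
    rw [dist_eq_norm]
    refine lt_of_le_of_lt (hgen k M hM) (lt_of_le_of_lt ?_ hk)
    have h2k : (0:ℝ) < 2 ^ k := by positivity
    have h6 : (6:ℝ) * d * c ≤ 6 * ((d:ℝ) + 1) * c := by nlinarith [Nat.cast_nonneg (α := ℝ) d]
    exact (div_le_div_iff_of_pos_right h2k).mpr h6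
  obtain ⟨y, hy⟩ := cauchySeq_tendsto_of_complete hcauchy
  refine ⟨ε, hεsigns, y, ?_, hy⟩
  have hSN : S N = 0 := by rw [hS]; simp
  have hbound : ∀ᶠ M in atTop, ‖S M‖ ≤ 8 * ((d:ℝ) + 1) * c := by
    filter_upwards [eventually_ge_atTop N] with M hM
    have h1 := hgen 0 M (by rw [hP0]; exact hM)
    rw [hP0, hSN, sub_zero] at h1
    refine le_trans h1 ?_
    have : (6:ℝ) * d * c / 2 ^ 0 = 6 * d * c := by norm_num
    rw [this]
    nlinarith [Nat.cast_nonneg (α := ℝ) d, le_of_lt hc]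
  exact le_of_tendsto hy.norm hbound

/-- If a null sequence `(aₙ)` in `ℝ^d` satisfies the Lévy–Steinitz condition
`∑ |⟨aₙ, e⟩| = ∞` for every unit vector `e`, then the achievement set
`S(aₙ) = {∑ εₙ aₙ : ε ∈ {-1,1}^ℕ}` is dense in `ℝ^d`. -/
theorem stmt6 (d : ℕ) (a : ℕ → EuclideanSpace ℝ (Fin d))
    (ha : Tendsto a atTop (nhds 0))
    (hLS : ∀ e : EuclideanSpace ℝ (Fin d), ‖e‖ = 1 → ¬ Summable (fun n => |⟪a n, e⟫|)) :
    Dense {x : EuclideanSpace ℝ (Fin d) | ∃ ε : ℕ → ℝ, (∀ n, ε n = 1 ∨ ε n = -1) ∧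
      Tendsto (fun N => ∑ n ∈ Finset.range N, ε n • a n) atTop (nhds x)} := by
  classical
  rw [Metric.dense_iff]
  intro x δ hδ
  set η0 : ℝ := δ / (100 * ((d : ℝ) + 1)) with hη0
  have hη0pos : 0 < η0 := by
    rw [hη0]; positivity
  have hth : ∀ k : ℕ, ∃ T : ℕ, ∀ n, T ≤ n → ‖a n‖ ≤ η0 / 2 ^ k := by
    intro k
    have h1 := NormedAddCommGroup.tendsto_nhds_zero.mp ha (η0 / 2 ^ k) (by positivity)
    obtain ⟨T, hT⟩ := eventually_atTop.mp h1
    exact ⟨T, fun n hn => le_of_lt (hT n hn)⟩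
  choose T0 hT0 using hth
  set A : ℕ := T0 0 with hA
  set r1 : EuclideanSpace ℝ (Fin d) := x - ∑ n ∈ Finset.range A, a n with hr1
  obtain ⟨N₂, hN₂ge, hcap⟩ := capacity d a hLS ‖r1‖ A
  obtain ⟨γ, hγabs, hγsum⟩ := frac_rep d a (Finset.Ico A N₂) r1 hcap
  have hsmall0 : ∀ n, A ≤ n → ‖a n‖ ≤ η0 := by
    intro n hn
    have := hT0 0 n hn
    simpa using this
  obtain ⟨θ, hθsigns, hθbound⟩ := roundSeg d a A N₂ η0 (le_of_lt hη0pos)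
    (fun n hn _ => hsmall0 n hn) γ hγabs
  have herr : ‖(∑ n ∈ Finset.Ico A N₂, θ n • a n) - r1‖ ≤ 2 * η0 * d := by
    have h := hθbound N₂ hN₂ge le_rfl
    have heq : ∑ n ∈ Finset.Ico A N₂, (θ n - γ n) • a n
        = (∑ n ∈ Finset.Ico A N₂, θ n • a n) - ∑ n ∈ Finset.Ico A N₂, γ n • a n := by
      rw [← Finset.sum_sub_distrib]
      refine Finset.sum_congr rfl fun n _ => ?_
      rw [sub_smul]
    rw [heq, hγsum] at h
    exact h
  obtain ⟨εt, hεtsigns, y, hynorm, hytend⟩ := tail_exists d a N₂ η0 hη0pos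
    (fun n hn => hsmall0 n (le_trans hN₂ge hn))
    (fun k => ⟨T0 k, fun n hn => hT0 k n hn⟩)
  set ε : ℕ → ℝ := fun n => if n < A then 1 else if n < N₂ then θ n else εt n with hε
  have hεsigns : ∀ n, ε n = 1 ∨ ε n = -1 := by
    intro n
    rw [hε]
    by_cases h1 : n < A
    · simp [h1]
    · by_cases h2 : n < N₂
      · simpa [h1, h2] using hθsigns n
      · simpa [h1, h2] using hεtsigns n
  set C : EuclideanSpace ℝ (Fin d) := ∑ n ∈ Finset.range N₂, ε n • a n with hC
  have hCeq : C = x + ((∑ n ∈ Finset.Ico A N₂, θ n • a n) - r1) := by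
    rw [hC]
    have hsplit : ∑ n ∈ Finset.range A, ε n • a n + ∑ n ∈ Finset.Ico A N₂, ε n • a n
        = ∑ n ∈ Finset.range N₂, ε n • a n :=
      Finset.sum_range_add_sum_Ico _ hN₂ge
    rw [← hsplit]
    have h1 : ∑ n ∈ Finset.range A, ε n • a n = ∑ n ∈ Finset.range A, a n := by
      refine Finset.sum_congr rfl fun n hn => ?_
      have : n < A := Finset.mem_range.mp hn
      rw [hε]
      simp [this]
    have h2 : ∑ n ∈ Finset.Ico A N₂, ε n • a n = ∑ n ∈ Finset.Ico A N₂, θ n • a n := by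
      refine Finset.sum_congr rfl fun n hn => ?_
      obtain ⟨hn1, hn2⟩ := Finset.mem_Ico.mp hn
      rw [hε]
      simp [Nat.not_lt.mpr hn1, hn2]
    rw [h1, h2, hr1]
    abel
  have htail : ∀ M, N₂ ≤ M → ∑ n ∈ Finset.range M, ε n • a n
      = C + ∑ n ∈ Finset.Ico N₂ M, εt n • a n := by
    intro M hM
    have hsplit : ∑ n ∈ Finset.range N₂, ε n • a n + ∑ n ∈ Finset.Ico N₂ M, ε n • a n
        = ∑ n ∈ Finset.range M, ε n • a n :=
      Finset.sum_range_add_sum_Ico _ hM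
    rw [← hsplit, hC]
    congr 1
    refine Finset.sum_congr rfl fun n hn => ?_
    obtain ⟨hn1, hn2⟩ := Finset.mem_Ico.mp hn
    have hnA : ¬ n < A := Nat.not_lt.mpr (le_trans hN₂ge hn1)
    have hnN : ¬ n < N₂ := Nat.not_lt.mpr hn1
    rw [hε]
    simp [hnA, hnN]
  have htendsto : Tendsto (fun M => ∑ n ∈ Finset.range M, ε n • a n) atTop (nhds (C + y)) := by
    have h1 : Tendsto (fun M => C + ∑ n ∈ Finset.Ico N₂ M, εt n • a n) atTop (nhds (C + y)) :=
      tendsto_const_nhds.add hytend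
    refine h1.congr' ?_
    filter_upwards [eventually_ge_atTop N₂] with M hM
    exact (htail M hM).symm
  refine ⟨C + y, ?_, ⟨ε, hεsigns, htendsto⟩⟩
  rw [Metric.mem_ball, dist_eq_norm]
  have hnorm : ‖C + y - x‖ ≤ 2 * η0 * d + 8 * ((d : ℝ) + 1) * η0 := by
    have : C + y - x = ((∑ n ∈ Finset.Ico A N₂, θ n • a n) - r1) + y := by
      rw [hCeq]; abel
    rw [this]
    exact le_trans (norm_add_le _ _) (add_le_add herr hynorm)
  refine lt_of_le_of_lt hnorm ?_
  have hd : (0:ℝ) ≤ d := Nat.cast_nonneg d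
  have : 2 * η0 * d + 8 * ((d : ℝ) + 1) * η0 ≤ 10 * ((d : ℝ) + 1) * η0 := by nlinarith
  refine lt_of_le_of_lt this ?_
  rw [hη0]
  have hdd : (0:ℝ) < (d:ℝ) + 1 := by positivity
  have heq : 10 * ((d:ℝ) + 1) * (δ / (100 * ((d:ℝ) + 1))) = δ / 10 := by
    field_simp
    ring
  rw [heq]
  linarith
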